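/- Let p ≥ 1, let Σ : ℝ^p → PD_p(ℝ) assign to each point a real positive definite p×p matrix, let M be a finite positive measure on (0,∞), and let g : ℝ^p × (0,∞) → ℝ be measurable. Fix x, y ∈ ℝ^p and assume the function t ↦ g(x;t) g(y;t) t^{-p} exp(−Q_xy(x−y)/t²) is M-integrable on (0,∞). Then ∫_0^∞ ( ∫_{ℝ^p} [g(x;t) k_x(u;t)] · [g(y;t) k_y(u;t)] du ) M(dt) = π^{-p/2} det((Σ_x + Σ_y)/2)^{-1/2} ∫_0^∞ g(x;t) g(y;t) t^{-p} exp(−Q_xy(x−y)/t²) M(dt). -/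

import Mathlib

open MeasureTheory Matrix Real

/-- `Q_xy(h) = hᵀ ((Σx+Σy)/2)⁻¹ h`. -/
noncomputable def Qform {p : ℕ} (A B : Matrix (Fin p) (Fin p) ℝ) (h : Fin p → ℝ) : ℝ :=
  h ⬝ᵥ ((((2:ℝ)⁻¹ • (A + B))⁻¹).mulVec h)

/-- The `p`-variate Gaussian density centered at `x` with covariance `(t²/4) Σ`. -/
noncomputable def gaussK {p : ℕ} (A : Matrix (Fin p) (Fin p) ℝ) (x : Fin p → ℝ) (t : ℝ)
    (u : Fin p → ℝ) : ℝ :=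
  (2 * Real.pi) ^ (-(p : ℝ) / 2) * ((t ^ 2 / 4) • A).det ^ (-(1:ℝ) / 2) *
    Real.exp (-(1 / 2) * ((u - x) ⬝ᵥ ((((t ^ 2 / 4) • A)⁻¹).mulVec (u - x))))

lemma dot_conj {p : ℕ} (M N : Matrix (Fin p) (Fin p) ℝ) (v : Fin p → ℝ) :
    (N.mulVec v) ⬝ᵥ (M.mulVec (N.mulVec v)) = v ⬝ᵥ ((Nᵀ * M * N).mulVec v) := by
  rw [mulVec_mulVec, dotProduct_mulVec, ← vecMul_transpose, vecMul_vecMul,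
    ← dotProduct_mulVec, Matrix.mul_assoc]

lemma dot_sym {p : ℕ} {M : Matrix (Fin p) (Fin p) ℝ} (hM : Mᵀ = M) (a b : Fin p → ℝ) :
    a ⬝ᵥ M.mulVec b = b ⬝ᵥ M.mulVec a := by
  rw [dotProduct_mulVec, ← mulVec_transpose, hM, dotProduct_comm]

lemma posdef_transpose_eq {p : ℕ} {M : Matrix (Fin p) (Fin p) ℝ} (hM : M.PosDef) : Mᵀ = M := by
  have := hM.1
  rwa [IsHermitian, conjTranspose_eq_transpose_of_trivial] at this

lemma posdef_smul {p : ℕ} {A : Matrix (Fin p) (Fin p) ℝ} (hA : A.PosDef) {c : ℝ}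
    (hc : 0 < c) : (c • A).PosDef := by
  refine ⟨?_, fun x hx => ?_⟩
  · rw [IsHermitian, conjTranspose_smul, hA.1.eq]
    simp
  · simpa [Finsupp.mul_sum, mul_assoc, mul_comm, mul_left_comm] using smul_pos hc (hA.2 hx)

lemma cont_quad {p : ℕ} (C : Matrix (Fin p) (Fin p) ℝ) :
    Continuous fun u : Fin p → ℝ => u ⬝ᵥ C.mulVec u := by
  simp only [dotProduct, mulVec]
  continuity

lemma gauss_std (p : ℕ) :
    ∫ v : Fin p → ℝ, Real.exp (-(1/2) * (v ⬝ᵥ v)) = (2 * Real.pi) ^ ((p : ℝ) / 2) := by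
  have h1 : ∀ v : Fin p → ℝ, Real.exp (-(1/2) * (v ⬝ᵥ v)) =
      ∏ i, Real.exp (-(1/2) * (v i ^ 2)) := by
    intro v
    rw [← Real.exp_sum]
    congr 1
    simp [dotProduct, Finset.mul_sum, sq]
  simp_rw [h1]
  rw [volume_pi, integral_fintype_prod_eq_pow (fun x : ℝ => Real.exp (-(1/2) * x ^ 2))]
  have : ∀ x : ℝ, -(1/2) * x ^ 2 = -((1/2) * x ^ 2) := fun x => by ring
  simp_rw [this]
  rw [show (fun x : ℝ => Real.exp (-(1/2 * x ^ 2))) = fun x : ℝ => Real.exp (-(1/2) * x ^ 2) by funext x; ring_nf, integral_gaussian (1/2)]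
  rw [Fintype.card_fin]
  rw [show Real.pi / (1/2) = 2 * Real.pi by ring]
  rw [← Real.rpow_natCast (√(2 * π)) p, Real.sqrt_eq_rpow, ← Real.rpow_mul (by positivity)]
  ring_nf

open scoped MatrixOrder in
lemma gauss_quad {p : ℕ} {C : Matrix (Fin p) (Fin p) ℝ} (hC : C.PosDef) :
    ∫ u : Fin p → ℝ, Real.exp (-(1/2) * (u ⬝ᵥ C.mulVec u)) =
      (2 * Real.pi) ^ ((p : ℝ) / 2) * C.det ^ (-(1:ℝ)/2) := by
  set R := CFC.sqrt C with hRdef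
  have hRR : R * R = C := CFC.sqrt_mul_sqrt_self C hC.posSemidef.nonneg
  have hRsym : Rᵀ = R := by
    have := (Matrix.nonneg_iff_posSemidef.mp (CFC.sqrt_nonneg C)).isHermitian
    rwa [IsHermitian, conjTranspose_eq_transpose_of_trivial] at this
  have hdetC : 0 < C.det := hC.det_pos
  have hdetR2 : R.det * R.det = C.det := by rw [← det_mul, hRR]
  have hdetR : R.det ≠ 0 := by
    intro h; rw [h, zero_mul] at hdetR2; exact hdetC.ne' hdetR2.symm
  have hdetRinv : (R⁻¹).det ≠ 0 := by
    rw [det_nonsing_inv, Ring.inverse_eq_inv']; exact inv_ne_zero hdetR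
  have habsR : |R.det| = Real.sqrt C.det := by
    rw [← Real.sqrt_mul_self_eq_abs, hdetR2]
  have hcont : Continuous fun u : Fin p → ℝ => Real.exp (-(1/2) * (u ⬝ᵥ C.mulVec u)) :=
    Real.continuous_exp.comp ((continuous_const.mul (cont_quad C)))
  have hmap := Real.map_matrix_volume_pi_eq_smul_volume_pi (ι := Fin p) hdetRinv
  have hint : ∫ v : Fin p → ℝ, Real.exp (-(1/2) * ((R⁻¹.mulVec v) ⬝ᵥ C.mulVec (R⁻¹.mulVec v)))
      = |(R⁻¹).det|⁻¹ * ∫ u : Fin p → ℝ, Real.exp (-(1/2) * (u ⬝ᵥ C.mulVec u)) := by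
    have h1 : ∀ v : Fin p → ℝ, Real.exp (-(1/2) * ((R⁻¹.mulVec v) ⬝ᵥ C.mulVec (R⁻¹.mulVec v)))
        = (fun u => Real.exp (-(1/2) * (u ⬝ᵥ C.mulVec u))) (Matrix.toLin' R⁻¹ v) := by
      intro v; simp [Matrix.toLin'_apply]
    simp_rw [h1]
    rw [← integral_map (by fun_prop) hcont.aestronglyMeasurable, hmap,
      integral_smul_measure, ENNReal.toReal_ofReal (by positivity), smul_eq_mul, abs_inv]
  have hconj : R⁻¹ᵀ * C * R⁻¹ = 1 := by
    rw [transpose_nonsing_inv, hRsym, ← hRR, ← Matrix.mul_assoc,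
      Matrix.nonsing_inv_mul R (isUnit_iff_ne_zero.mpr hdetR), Matrix.one_mul,
      Matrix.mul_nonsing_inv R (isUnit_iff_ne_zero.mpr hdetR)]
  have hlhs : ∀ v : Fin p → ℝ,
      (R⁻¹.mulVec v) ⬝ᵥ C.mulVec (R⁻¹.mulVec v) = v ⬝ᵥ v := by
    intro v; rw [dot_conj, hconj, one_mulVec]
  simp_rw [hlhs, gauss_std p] at hint
  have habs : |(R⁻¹).det| = Real.sqrt C.det⁻¹ := by
    rw [det_nonsing_inv, Ring.inverse_eq_inv', abs_inv, habsR, Real.sqrt_inv]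
  rw [habs] at hint
  have hCrpow : C.det ^ (-(1:ℝ)/2) = Real.sqrt C.det⁻¹ := by
    rw [show (-(1:ℝ)/2) = -(1/2) by ring, Real.rpow_neg hdetC.le, Real.sqrt_inv,
      Real.sqrt_eq_rpow]
  rw [hCrpow]
  have hs : Real.sqrt C.det⁻¹ ≠ 0 := by positivity
  field_simp at hint ⊢
  linarith [hint]

lemma woodbury {p : ℕ} {P Q : Matrix (Fin p) (Fin p) ℝ} (hP : IsUnit P.det)
    (hQ : IsUnit Q.det) (hPQ : IsUnit (P + Q).det) :
    (P⁻¹ + Q⁻¹)⁻¹ = Q - Q * (P + Q)⁻¹ * Q := by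
  apply Matrix.inv_eq_right_inv
  have e1 : (P⁻¹ + Q⁻¹) * Q = P⁻¹ * (P + Q) := by
    rw [Matrix.add_mul, Matrix.nonsing_inv_mul Q hQ, Matrix.mul_add,
      Matrix.nonsing_inv_mul P hP, add_comm]
  have e2 : (P⁻¹ + Q⁻¹) * (Q - Q * (P + Q)⁻¹ * Q)
      = (P⁻¹ + Q⁻¹) * Q - ((P⁻¹ + Q⁻¹) * Q) * ((P + Q)⁻¹ * Q) := by
    noncomm_ring
  rw [e2, e1]
  have e3 : P⁻¹ * (P + Q) * ((P + Q)⁻¹ * Q) = P⁻¹ * Q := by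
    rw [Matrix.mul_assoc, ← Matrix.mul_assoc (P + Q), Matrix.mul_nonsing_inv _ hPQ,
      Matrix.one_mul]
  rw [e3, Matrix.mul_add, Matrix.nonsing_inv_mul P hP]
  noncomm_ring

lemma complete_sq {p : ℕ} {P Q : Matrix (Fin p) (Fin p) ℝ} (hP : P.PosDef) (hQ : Q.PosDef)
    (hPt : Pᵀ = P) (hQt : Qᵀ = Q) (d w : Fin p → ℝ) :
    w ⬝ᵥ P.mulVec w + (w + d) ⬝ᵥ Q.mulVec (w + d)
      = (w + (P + Q)⁻¹.mulVec (Q.mulVec d)) ⬝ᵥ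
          (P + Q).mulVec (w + (P + Q)⁻¹.mulVec (Q.mulVec d))
        + d ⬝ᵥ ((P⁻¹ + Q⁻¹)⁻¹).mulVec d := by
  have hSpd : (P + Q).PosDef := hP.add_posSemidef hQ.posSemidef
  have hSt : (P + Q)ᵀ = P + Q := by rw [transpose_add, hPt, hQt]
  have hSu : IsUnit (P + Q).det := isUnit_iff_ne_zero.mpr hSpd.det_pos.ne'
  set S := P + Q with hSdef
  set m : Fin p → ℝ := S⁻¹.mulVec (Q.mulVec d) with hmdef
  have hm : S.mulVec m = Q.mulVec d := by
    rw [hmdef, mulVec_mulVec, Matrix.mul_nonsing_inv _ hSu, one_mulVec]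
  have key1 : m ⬝ᵥ S.mulVec w = d ⬝ᵥ Q.mulVec w := by
    rw [dot_sym hSt, hm, dot_sym hQt]
  have key1' : w ⬝ᵥ S.mulVec m = d ⬝ᵥ Q.mulVec w := by rw [dot_sym hSt]; exact key1
  have key2 : m ⬝ᵥ S.mulVec m = d ⬝ᵥ (Q * (S⁻¹ * Q)).mulVec d := by
    rw [hm, dot_sym hQt, hmdef, mulVec_mulVec, mulVec_mulVec, Matrix.mul_assoc]
  have key3 : d ⬝ᵥ ((P⁻¹ + Q⁻¹)⁻¹).mulVec d
      = d ⬝ᵥ Q.mulVec d - d ⬝ᵥ (Q * (S⁻¹ * Q)).mulVec d := by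
    rw [woodbury (isUnit_iff_ne_zero.mpr hP.det_pos.ne') (isUnit_iff_ne_zero.mpr hQ.det_pos.ne')
      hSu, ← hSdef, Matrix.mul_assoc, sub_mulVec, dotProduct_sub]
  have expand : (w + m) ⬝ᵥ S.mulVec (w + m)
      = w ⬝ᵥ S.mulVec w + w ⬝ᵥ S.mulVec m + m ⬝ᵥ S.mulVec w + m ⬝ᵥ S.mulVec m := by
    simp only [mulVec_add, dotProduct_add, add_dotProduct]
    ring
  have expandS : w ⬝ᵥ S.mulVec w = w ⬝ᵥ P.mulVec w + w ⬝ᵥ Q.mulVec w := by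
    rw [hSdef, add_mulVec, dotProduct_add]
  have expandL : (w + d) ⬝ᵥ Q.mulVec (w + d)
      = w ⬝ᵥ Q.mulVec w + w ⬝ᵥ Q.mulVec d + d ⬝ᵥ Q.mulVec w + d ⬝ᵥ Q.mulVec d := by
    simp only [mulVec_add, dotProduct_add, add_dotProduct]
    ring
  have hwQd : w ⬝ᵥ Q.mulVec d = d ⬝ᵥ Q.mulVec w := dot_sym hQt w d
  rw [expand, expandS, expandL, key1, key1', key2, key3, hwQd]
  ring

lemma const_id (p : ℕ) {t dA dB dS D : ℝ} (ht : 0 < t) (hdA : 0 < dA) (hdB : 0 < dB)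
    (hdS : 0 < dS) (hD : 0 < D) (hprod : dA * dB * dS = (t ^ 2 / 2) ^ p * D) :
    ((2 * Real.pi) ^ (-(p:ℝ)/2) * dA ^ (-(1:ℝ)/2)) *
        ((2 * Real.pi) ^ (-(p:ℝ)/2) * dB ^ (-(1:ℝ)/2)) *
        ((2 * Real.pi) ^ ((p:ℝ)/2) * dS ^ (-(1:ℝ)/2)) =
      Real.pi ^ (-(p:ℝ)/2) * D ^ (-(1:ℝ)/2) * t ^ (-(p:ℝ)) := by
  have h2pi : (0:ℝ) < 2 * Real.pi := by positivity
  have ha : (0:ℝ) < t ^ 2 / 2 := by positivity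
  have e1 : ((2 * Real.pi) ^ (-(p:ℝ)/2) * dA ^ (-(1:ℝ)/2)) *
        ((2 * Real.pi) ^ (-(p:ℝ)/2) * dB ^ (-(1:ℝ)/2)) *
        ((2 * Real.pi) ^ ((p:ℝ)/2) * dS ^ (-(1:ℝ)/2)) =
      ((2 * Real.pi) ^ (-(p:ℝ)/2) * (2 * Real.pi) ^ (-(p:ℝ)/2) * (2 * Real.pi) ^ ((p:ℝ)/2)) *
        (dA ^ (-(1:ℝ)/2) * dB ^ (-(1:ℝ)/2) * dS ^ (-(1:ℝ)/2)) := by ring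
  rw [e1, ← Real.rpow_add h2pi, ← Real.rpow_add h2pi,
    ← Real.mul_rpow hdA.le hdB.le, ← Real.mul_rpow (by positivity) hdS.le, hprod,
    Real.mul_rpow (by positivity) hD.le,
    ← Real.rpow_natCast (t ^ 2 / 2) p, ← Real.rpow_mul ha.le,
    show (-(p:ℝ)/2 + -(p:ℝ)/2 + (p:ℝ)/2) = -(p:ℝ)/2 by ring,
    show ((p:ℝ) * (-(1:ℝ)/2)) = -(p:ℝ)/2 by ring]
  have e2 : (2 * Real.pi) ^ (-(p:ℝ)/2) * ((t ^ 2 / 2) ^ (-(p:ℝ)/2) * D ^ (-(1:ℝ)/2)) =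
      ((2 * Real.pi) * (t ^ 2 / 2)) ^ (-(p:ℝ)/2) * D ^ (-(1:ℝ)/2) := by
    rw [Real.mul_rpow h2pi.le ha.le]; ring
  rw [e2, show (2 * Real.pi) * (t ^ 2 / 2) = Real.pi * t ^ 2 by ring,
    Real.mul_rpow Real.pi_pos.le (by positivity),
    ← Real.rpow_natCast t 2, ← Real.rpow_mul ht.le,
    show ((2:ℕ):ℝ) * (-(p:ℝ)/2) = -(p:ℝ) by push_cast; ring]
  ring

lemma inner_int {p : ℕ} {A B : Matrix (Fin p) (Fin p) ℝ} (hA : A.PosDef) (hB : B.PosDef)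
    (x y : Fin p → ℝ) {t : ℝ} (ht : 0 < t) :
    ∫ u : Fin p → ℝ, gaussK A x t u * gaussK B y t u =
      Real.pi ^ (-(p : ℝ) / 2) * ((2:ℝ)⁻¹ • (A + B)).det ^ (-(1:ℝ) / 2) * t ^ (-(p : ℝ)) *
        Real.exp (-(Qform A B (x - y)) / t ^ 2) := by
  have ha : (0:ℝ) < t ^ 2 / 4 := by positivity
  set Aa : Matrix (Fin p) (Fin p) ℝ := (t ^ 2 / 4) • A with hAadef
  set Bb : Matrix (Fin p) (Fin p) ℝ := (t ^ 2 / 4) • B with hBbdef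
  have hAa : Aa.PosDef := posdef_smul hA ha
  have hBb : Bb.PosDef := posdef_smul hB ha
  have hAau : IsUnit Aa.det := isUnit_iff_ne_zero.mpr hAa.det_pos.ne'
  have hBbu : IsUnit Bb.det := isUnit_iff_ne_zero.mpr hBb.det_pos.ne'
  set P : Matrix (Fin p) (Fin p) ℝ := Aa⁻¹ with hPdef
  set Q : Matrix (Fin p) (Fin p) ℝ := Bb⁻¹ with hQdef
  have hP : P.PosDef := hAa.inv
  have hQ : Q.PosDef := hBb.inv
  have hPt : Pᵀ = P := posdef_transpose_eq hP
  have hQt : Qᵀ = Q := posdef_transpose_eq hQ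
  have hS : (P + Q).PosDef := hP.add_posSemidef hQ.posSemidef
  set d : Fin p → ℝ := x - y with hddef
  set m : Fin p → ℝ := (P + Q)⁻¹.mulVec (Q.mulVec d) with hmdef
  have hPinv : P⁻¹ = Aa := Matrix.nonsing_inv_nonsing_inv Aa hAau
  have hQinv : Q⁻¹ = Bb := Matrix.nonsing_inv_nonsing_inv Bb hBbu
  -- the residual quadratic term
  have hABpd : (A + B).PosDef := hA.add_posSemidef hB.posSemidef
  have hhalfpd : ((2:ℝ)⁻¹ • (A + B)).PosDef := posdef_smul hABpd (by norm_num)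
  have hres : -(1/2) * (d ⬝ᵥ ((P⁻¹ + Q⁻¹)⁻¹).mulVec d) = -(Qform A B d) / t ^ 2 := by
    have h1 : P⁻¹ + Q⁻¹ = (t ^ 2 / 2) • ((2:ℝ)⁻¹ • (A + B)) := by
      rw [hPinv, hQinv, hAadef, hBbdef, ← smul_add, smul_smul]
      congr 1
      ring
    have h2 : ((t ^ 2 / 2) • ((2:ℝ)⁻¹ • (A + B)))⁻¹
        = (t ^ 2 / 2)⁻¹ • ((2:ℝ)⁻¹ • (A + B))⁻¹ := by
      apply Matrix.inv_eq_right_inv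
      rw [smul_mul_smul_comm, Matrix.mul_nonsing_inv _
        (isUnit_iff_ne_zero.mpr hhalfpd.det_pos.ne'),
        mul_inv_cancel₀ (by positivity : (t:ℝ) ^ 2 / 2 ≠ 0), one_smul]
    rw [h1, h2, smul_mulVec, dotProduct_smul, smul_eq_mul]
    rw [show d ⬝ᵥ (((2:ℝ)⁻¹ • (A + B))⁻¹).mulVec d = Qform A B d from rfl]
    field_simp
  -- pointwise rewriting of the integrand
  set c0 : ℝ := ((2 * Real.pi) ^ (-(p : ℝ) / 2) * Aa.det ^ (-(1:ℝ) / 2)) *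
      ((2 * Real.pi) ^ (-(p : ℝ) / 2) * Bb.det ^ (-(1:ℝ) / 2)) *
      Real.exp (-(Qform A B d) / t ^ 2) with hc0def
  have hintg : ∀ u : Fin p → ℝ, gaussK A x t u * gaussK B y t u
      = c0 * Real.exp (-(1/2) * ((u - (x - m)) ⬝ᵥ (P + Q).mulVec (u - (x - m)))) := by
    intro u
    have huy : u - y = (u - x) + d := by rw [hddef]; abel
    have hux : u - (x - m) = (u - x) + m := by abel
    have hcs := complete_sq hP hQ hPt hQt d (u - x)
    rw [← hmdef] at hcs
    rw [gaussK, gaussK, huy, hux]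
    rw [show ((t ^ 2 / 4) • A) = Aa from rfl, show ((t ^ 2 / 4) • B) = Bb from rfl,
      ← hPdef, ← hQdef]
    rw [hc0def, ← hres]
    have := congrArg (fun r : ℝ => Real.exp (-(1/2) * r)) hcs
    simp only [neg_mul, mul_add, Real.exp_add] at this ⊢
    linear_combination ((2 * Real.pi) ^ (-(p:ℝ) / 2) * Aa.det ^ (-(1:ℝ) / 2) *
      ((2 * Real.pi) ^ (-(p:ℝ) / 2) * Bb.det ^ (-(1:ℝ) / 2))) * this
  simp_rw [hintg]
  rw [MeasureTheory.integral_const_mul]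
  have hshift : ∫ u : Fin p → ℝ,
      Real.exp (-(1/2) * ((u - (x - m)) ⬝ᵥ (P + Q).mulVec (u - (x - m))))
      = ∫ w : Fin p → ℝ, Real.exp (-(1/2) * (w ⬝ᵥ (P + Q).mulVec w)) :=
    integral_sub_right_eq_self
      (fun w => Real.exp (-(1/2) * (w ⬝ᵥ (P + Q).mulVec w))) (x - m)
  rw [hshift, gauss_quad hS]
  -- now the constants
  have hprod : Aa.det * Bb.det * (P + Q).det = (t ^ 2 / 2) ^ p * ((2:ℝ)⁻¹ • (A + B)).det := by
    have hm1 : Aa * (P + Q) * Bb = Aa + Bb := by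
      rw [Matrix.mul_add, Matrix.mul_nonsing_inv _ hAau, Matrix.add_mul, Matrix.one_mul,
        Matrix.mul_assoc, Matrix.nonsing_inv_mul _ hBbu, Matrix.mul_one, add_comm]
    have hm2 : Aa + Bb = (t ^ 2 / 2) • ((2:ℝ)⁻¹ • (A + B)) := by
      rw [hAadef, hBbdef, ← smul_add, smul_smul]
      congr 1
      ring
    have hd1 : Aa.det * (P + Q).det * Bb.det = ((t ^ 2 / 2) • ((2:ℝ)⁻¹ • (A + B))).det := by
      rw [← det_mul, ← det_mul, hm1, hm2]
    have hd2 : ((t ^ 2 / 2) • ((2:ℝ)⁻¹ • (A + B))).det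
        = (t ^ 2 / 2) ^ p * ((2:ℝ)⁻¹ • (A + B)).det := by
      rw [det_smul, Fintype.card_fin]
    rw [show Aa.det * Bb.det * (P + Q).det = Aa.det * (P + Q).det * Bb.det by ring, hd1, hd2]
  rw [hc0def]
  rw [show ((2 * Real.pi) ^ (-(p : ℝ) / 2) * Aa.det ^ (-(1:ℝ) / 2)) *
      ((2 * Real.pi) ^ (-(p : ℝ) / 2) * Bb.det ^ (-(1:ℝ) / 2)) *
      Real.exp (-(Qform A B d) / t ^ 2) *
      ((2 * Real.pi) ^ ((p : ℝ) / 2) * (P + Q).det ^ (-(1:ℝ) / 2))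
    = ((2 * Real.pi) ^ (-(p:ℝ)/2) * Aa.det ^ (-(1:ℝ)/2)) *
      ((2 * Real.pi) ^ (-(p:ℝ)/2) * Bb.det ^ (-(1:ℝ)/2)) *
      ((2 * Real.pi) ^ ((p:ℝ)/2) * (P + Q).det ^ (-(1:ℝ)/2)) *
      Real.exp (-(Qform A B d) / t ^ 2) by ring]
  rw [const_id p ht hAa.det_pos hBb.det_pos hS.det_pos hhalfpd.det_pos hprod]

/-- mixture of convolutions of spatially varying Gaussian kernels. -/
theorem mixture_convolution_closed_form (p : ℕ) (hp : 1 ≤ p)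
    (S : (Fin p → ℝ) → Matrix (Fin p) (Fin p) ℝ) (hS : ∀ x, (S x).PosDef)
    (M : Measure ℝ) [IsFiniteMeasure M]
    (g : (Fin p → ℝ) → ℝ → ℝ) (hg : Measurable fun q : (Fin p → ℝ) × ℝ => g q.1 q.2)
    (x y : Fin p → ℝ)
    (hint : IntegrableOn
      (fun t => g x t * g y t * t ^ (-(p : ℝ)) *
        Real.exp (-(Qform (S x) (S y) (x - y)) / t ^ 2)) (Set.Ioi 0) M) :
    ∫ t in Set.Ioi (0:ℝ),
        (∫ u : Fin p → ℝ, (g x t * gaussK (S x) x t u) * (g y t * gaussK (S y) y t u)) ∂M =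
      Real.pi ^ (-(p : ℝ) / 2) * ((2:ℝ)⁻¹ • (S x + S y)).det ^ (-(1:ℝ) / 2) *
        ∫ t in Set.Ioi (0:ℝ),
          g x t * g y t * t ^ (-(p : ℝ)) *
            Real.exp (-(Qform (S x) (S y) (x - y)) / t ^ 2) ∂M := by
  have key : ∀ t ∈ Set.Ioi (0:ℝ),
      (∫ u : Fin p → ℝ, (g x t * gaussK (S x) x t u) * (g y t * gaussK (S y) y t u))
        = (Real.pi ^ (-(p : ℝ) / 2) * ((2:ℝ)⁻¹ • (S x + S y)).det ^ (-(1:ℝ) / 2)) *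
          (g x t * g y t * t ^ (-(p : ℝ)) *
            Real.exp (-(Qform (S x) (S y) (x - y)) / t ^ 2)) := by
    intro t htpos
    have h1 : ∀ u : Fin p → ℝ, (g x t * gaussK (S x) x t u) * (g y t * gaussK (S y) y t u)
        = (g x t * g y t) * (gaussK (S x) x t u * gaussK (S y) y t u) := fun u => by ring
    simp_rw [h1]
    rw [MeasureTheory.integral_const_mul, inner_int (hS x) (hS y) x y (Set.mem_Ioi.mp htpos)]
    ring
  rw [MeasureTheory.setIntegral_congr_fun measurableSet_Ioi key,
    MeasureTheory.integral_const_mul]
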